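/- If S(t) = Σ a_n t^n ∈ ℚ[[t]] is algebraic over ℚ(t), i.e., there is a nonzero polynomial P ∈ ℚ[T,t] with P(S(t),t) = 0, then there exists a positive integer C such that a_n · C^{n+1} ∈ ℤ for all n (Eisenstein's theorem). -/

import Mathlib

open Polynomial PowerSeries Finset

noncomputable section EisensteinAux

namespace EisensteinAux

/-- The subring of `ℚ` consisting of integers. -/
def IR : Subring ℚ := (Int.castRingHom ℚ).range

lemma intCast_mem_IR (z : ℤ) : (z : ℚ) ∈ IR := ⟨z, rfl⟩

lemma natCast_mem_IR (n : ℕ) : (n : ℚ) ∈ IR := ⟨(n : ℤ), by simp⟩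

lemma natCast_pow_mem_IR (n k : ℕ) : (n : ℚ) ^ k ∈ IR := IR.pow_mem (natCast_mem_IR n) k

lemma intCast_pow_mem_IR (e : ℤ) (k : ℕ) : (e : ℚ) ^ k ∈ IR := IR.pow_mem (intCast_mem_IR e) k

lemma IR_exists {q : ℚ} (h : q ∈ IR) : ∃ z : ℤ, q = (z : ℚ) := by
  obtain ⟨z, hz⟩ := h
  exact ⟨z, hz.symm⟩

/-- Clearing denominators of a single rational. -/
lemma rat_mul_den (q : ℚ) : q * (q.den : ℚ) = (q.num : ℚ) := by
  have hd : (q.den : ℚ) ≠ 0 := Nat.cast_ne_zero.mpr q.den_nz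
  have h0 : (q.num : ℚ) / (q.den : ℚ) * (q.den : ℚ) = (q.num : ℚ) := div_mul_cancel₀ _ hd
  rw [Rat.num_div_den] at h0
  exact h0

/-- Clearing denominators of all coefficients of a polynomial. -/
lemma den_clear (p : Polynomial ℚ) :
    ∃ D : ℕ, 0 < D ∧ ∀ i, p.coeff i * (D : ℚ) ∈ IR := by
  refine ⟨∏ i ∈ p.support, (p.coeff i).den, Finset.prod_pos fun i _ => (p.coeff i).pos, ?_⟩
  intro i
  by_cases hi : i ∈ p.support
  · obtain ⟨k, hk⟩ := Finset.dvd_prod_of_mem (fun i => (p.coeff i).den) hi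
    rw [hk]
    push_cast
    rw [← mul_assoc, rat_mul_den]
    exact IR.mul_mem (intCast_mem_IR _) (natCast_mem_IR _)
  · rw [Polynomial.notMem_support_iff.mp hi, zero_mul]
    exact IR.zero_mem

/-- Clearing denominators of a finite family of polynomials. -/
lemma den_clear_fam (f : ℕ → Polynomial ℚ) (M : ℕ) :
    ∃ D : ℕ, 0 < D ∧ ∀ j < M, ∀ i, (f j).coeff i * (D : ℚ) ∈ IR := by
  induction M with
  | zero => exact ⟨1, one_pos, fun j hj => absurd hj (Nat.not_lt_zero j)⟩
  | succ M ih =>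
    obtain ⟨D1, hD1, h1⟩ := ih
    obtain ⟨D2, hD2, h2⟩ := den_clear (f M)
    refine ⟨D1 * D2, Nat.mul_pos hD1 hD2, ?_⟩
    intro j hj i
    push_cast
    rcases Nat.lt_succ_iff_lt_or_eq.mp hj with h | rfl
    · rw [← mul_assoc]
      exact IR.mul_mem (h1 j h i) (natCast_mem_IR D2)
    · rw [show (f j).coeff i * ((D1 : ℚ) * D2) = (f j).coeff i * D2 * D1 by ring]
      exact IR.mul_mem (h2 i) (natCast_mem_IR D1)

lemma hasseDeriv_map {R S : Type*} [Semiring R] [Semiring S] (f : R →+* S) (k : ℕ)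
    (p : R[X]) : Polynomial.hasseDeriv k (p.map f) = (Polynomial.hasseDeriv k p).map f := by
  ext n
  simp [Polynomial.hasseDeriv_coeff, Polynomial.coeff_map]

/-- Taylor expansion for polynomial evaluation in a commutative ring. -/
lemma eval_add_eq_sum {R : Type*} [CommRing R] (p : R[X]) (a b : R) :
    p.eval (a + b) = ∑ j ∈ Finset.range (p.natDegree + 1),
      (Polynomial.hasseDeriv j p).eval a * b ^ j := by
  rw [add_comm a b, ← Polynomial.taylor_eval a p b,
    Polynomial.eval_eq_sum_range' (n := p.natDegree + 1)
      (by rw [Polynomial.natDegree_taylor]; omega)]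
  exact Finset.sum_congr rfl fun j _ => by rw [Polynomial.taylor_coeff]

/-- Integrality of coefficients of powers of a power series. -/
lemma pow_coeff_int (R : PowerSeries ℚ) (e : ℤ) (K : ℕ)
    (H : ∀ l ≤ K, PowerSeries.coeff l R * (e : ℚ) ^ (l + 1) ∈ IR) :
    ∀ j, ∀ k ≤ K, PowerSeries.coeff k (R ^ j) * (e : ℚ) ^ (k + j) ∈ IR := by
  intro j
  induction j with
  | zero =>
    intro k hk
    rw [pow_zero, PowerSeries.coeff_one]
    split_ifs
    · rw [one_mul, Nat.add_zero]; exact intCast_pow_mem_IR e k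
    · rw [zero_mul]; exact IR.zero_mem
  | succ j ih =>
    intro k hk
    rw [pow_succ', PowerSeries.coeff_mul, Finset.sum_mul]
    apply IR.sum_mem
    rintro ⟨i, l⟩ hx
    have hil : i + l = k := Finset.HasAntidiagonal.mem_antidiagonal.mp hx
    have heq : PowerSeries.coeff i R * PowerSeries.coeff l (R ^ j) * (e : ℚ) ^ (k + (j + 1))
        = (PowerSeries.coeff i R * (e : ℚ) ^ (i + 1)) *
          (PowerSeries.coeff l (R ^ j) * (e : ℚ) ^ (l + j)) := by
      rw [show k + (j + 1) = (i + 1) + (l + j) by omega, pow_add]; ring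
    rw [heq]
    exact IR.mul_mem (H i (by omega)) (ih l (by omega))

end EisensteinAux

end EisensteinAux

/-- Eisenstein's theorem: an algebraic power series with rational coefficients has
coefficients with at most geometrically growing denominators. -/
theorem eisenstein_theorem (S : PowerSeries ℚ)
    (P : Polynomial (Polynomial ℚ)) (hP : P ≠ 0)
    (hPS : Polynomial.eval₂ Polynomial.coeToPowerSeries.ringHom S P = 0) :
    ∃ C : ℕ, 0 < C ∧ ∀ n : ℕ, ∃ m : ℤ,
      PowerSeries.coeff n S * (C : ℚ) ^ (n + 1) = (m : ℚ) := by
  classical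
  open EisensteinAux in
  set φ : Polynomial ℚ →+* PowerSeries ℚ := Polynomial.coeToPowerSeries.ringHom with hφ
  have hφinj : Function.Injective φ := fun x y h => Polynomial.coe_injective ℚ h
  have hφcoeff : ∀ (p : Polynomial ℚ) (n : ℕ), PowerSeries.coeff n (φ p) = p.coeff n :=
    fun p n => Polynomial.coeff_coe p n
  -- minimal-degree annihilator
  have hex : ∃ n : ℕ, ∃ Q : Polynomial (Polynomial ℚ), Q ≠ 0 ∧
      Polynomial.eval₂ φ S Q = 0 ∧ Q.natDegree = n := ⟨P.natDegree, P, hP, hPS, rfl⟩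
  set d := Nat.find hex with hd
  obtain ⟨P₀, hP₀ne, hP₀S, hP₀deg⟩ := Nat.find_spec hex
  have hmin : ∀ Q : Polynomial (Polynomial ℚ), Q ≠ 0 →
      Polynomial.eval₂ φ S Q = 0 → d ≤ Q.natDegree :=
    fun Q h1 h2 => Nat.find_le ⟨Q, h1, h2, rfl⟩
  have hd1 : 1 ≤ d := by
    by_contra hcon
    have hdeg0 : P₀.natDegree = 0 := by omega
    obtain ⟨p, rfl⟩ := Polynomial.natDegree_eq_zero.mp hdeg0
    rw [Polynomial.eval₂_C] at hP₀S
    have : p = 0 := hφinj (by rw [hP₀S, map_zero])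
    exact hP₀ne (by rw [this, map_zero])
  -- the derivative does not annihilate S
  have hP'ne : Polynomial.derivative P₀ ≠ 0 := by
    intro hcon
    have := Polynomial.natDegree_eq_zero_of_derivative_eq_zero hcon
    omega
  set QS' := Polynomial.eval₂ φ S (Polynomial.derivative P₀) with hQS'def
  have hQS'ne : QS' ≠ 0 := by
    intro hcon
    have hle := hmin _ hP'ne hcon
    have hlt := Polynomial.natDegree_derivative_lt (p := P₀) (by omega)
    omega
  -- h = order of QS'
  have hexh : ∃ n, PowerSeries.coeff n QS' ≠ 0 := by
    by_contra hcon
    push_neg at hcon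
    exact hQS'ne (PowerSeries.ext fun n => by rw [hcon n, map_zero])
  set h := Nat.find hexh with hhdef
  set c := PowerSeries.coeff h QS' with hcdef
  have hc : c ≠ 0 := Nat.find_spec hexh
  have hlow : ∀ i < h, PowerSeries.coeff i QS' = 0 :=
    fun i hi => not_not.mp (Nat.find_min hexh hi)
  set m := h + 2 with hmdef
  set a := PowerSeries.trunc m S with hadef
  set A := φ a with hAdef
  have hAcoeff : ∀ i, PowerSeries.coeff i A = if i < m then PowerSeries.coeff i S else 0 :=
    fun i => by rw [hAdef, hφcoeff, hadef, PowerSeries.coeff_trunc]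
  -- obtain R with S = A + X^m * R
  have hdvd : (PowerSeries.X : PowerSeries ℚ) ^ m ∣ (S - A) := by
    rw [PowerSeries.X_pow_dvd_iff]
    intro i hi
    rw [map_sub, hAcoeff i, if_pos hi, sub_self]
  obtain ⟨R, hR⟩ := hdvd
  have hS : S = A + PowerSeries.X ^ m * R := by rw [← hR]; ring
  -- Taylor data
  set Q := P₀.map φ with hQdef
  have hQS : Q.eval S = 0 := by rw [hQdef, Polynomial.eval_map, hP₀S]
  have hQne : Q ≠ 0 := fun hcon => hP₀ne (Polynomial.map_injective φ hφinj (by rw [Polynomial.map_zero]; exact hcon))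
  set N := Q.natDegree with hNdef
  have hNd : N = d := by
    rw [hNdef, hQdef, Polynomial.natDegree_map_eq_of_injective hφinj, hP₀deg]
  set G : ℕ → Polynomial ℚ := fun j => (Polynomial.hasseDeriv j P₀).eval a with hGdef
  have keyG : ∀ j, (Polynomial.hasseDeriv j Q).eval A = φ (G j) := by
    intro j
    rw [hQdef, EisensteinAux.hasseDeriv_map, Polynomial.eval_map, hAdef, Polynomial.eval₂_hom]
  -- derivative eval at S is QS'
  have hQ'S : (Polynomial.hasseDeriv 1 Q).eval S = QS' := by
    rw [Polynomial.hasseDeriv_one, hQdef, Polynomial.derivative_map, Polynomial.eval_map]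
  -- X^h ∣ QS'
  have hXhQS' : (PowerSeries.X : PowerSeries ℚ) ^ h ∣ QS' := by
    rw [PowerSeries.X_pow_dvd_iff]; exact hlow
  -- main expansion
  have hexp : (0 : PowerSeries ℚ) = ∑ j ∈ Finset.range (N + 1),
      φ (G j) * (PowerSeries.X ^ m * R) ^ j := by
    calc (0 : PowerSeries ℚ) = Q.eval S := hQS.symm
    _ = Q.eval (A + PowerSeries.X ^ m * R) := by rw [← hS]
    _ = ∑ j ∈ Finset.range (N + 1),
        (Polynomial.hasseDeriv j Q).eval A * (PowerSeries.X ^ m * R) ^ j :=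
      EisensteinAux.eval_add_eq_sum Q A _
    _ = _ := Finset.sum_congr rfl fun j _ => by rw [keyG j]
  -- divisibility of G 0
  have hG0dvd : (PowerSeries.X : PowerSeries ℚ) ^ (m + h) ∣ φ (G 0) := by
    have e1 : φ (G 0) = Q.eval A := by
      rw [← keyG 0, Polynomial.hasseDeriv_zero, LinearMap.id_apply]
    have e2 : Q.eval (S + (A - S)) = ∑ j ∈ Finset.range (N + 1),
        (Polynomial.hasseDeriv j Q).eval S * (A - S) ^ j :=
      EisensteinAux.eval_add_eq_sum Q S _
    have e3 : A = S + (A - S) := by ring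
    rw [e1, e3, e2]
    apply Finset.dvd_sum
    intro j hj
    have hAS : A - S = -(PowerSeries.X ^ m * R) := by rw [← hR]; ring
    match j with
    | 0 =>
      rw [Polynomial.hasseDeriv_zero, LinearMap.id_apply, hQS, zero_mul]
      exact dvd_zero _
    | 1 =>
      rw [hQ'S, hAS, pow_one]
      rw [pow_add]
      obtain ⟨w, hw⟩ := hXhQS'
      exact ⟨-(w * R), by rw [hw]; ring⟩
    | (j + 2) =>
      apply Dvd.dvd.mul_left
      rw [hAS]
      have : (PowerSeries.X : PowerSeries ℚ) ^ (m + h) ∣ (PowerSeries.X ^ m * R) ^ (j + 2) := by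
        rw [mul_pow, ← pow_mul]
        have hmm : m + h ≤ m * (j + 2) := by
          have h1 : m * (j + 2) = m * j + m + m := by ring
          omega
        exact Dvd.dvd.mul_right (pow_dvd_pow _ hmm) _
      rcases this with ⟨w, hw⟩
      exact ⟨(-1) ^ (j + 2) * w, by rw [neg_pow, hw]; ring⟩
  obtain ⟨g₀, hg₀⟩ := hG0dvd
  have hg₀coeff : ∀ n, PowerSeries.coeff n g₀ = (G 0).coeff (n + (m + h)) := by
    intro n
    have := PowerSeries.coeff_X_pow_mul g₀ (m + h) n
    rw [← hg₀] at this
    rw [← this, hφcoeff, add_comm]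
  -- G 1 agrees with QS' below m
  have hG1close : ∀ i, i < m → (G 1).coeff i = PowerSeries.coeff i QS' := by
    have hdvd1 : (PowerSeries.X : PowerSeries ℚ) ^ m ∣ (φ (G 1) - QS') := by
      have e1 : φ (G 1) = (Polynomial.hasseDeriv 1 Q).eval A := (keyG 1).symm
      have e2 : A - S ∣ ((Polynomial.hasseDeriv 1 Q).eval A - (Polynomial.hasseDeriv 1 Q).eval S) :=
        Polynomial.sub_dvd_eval_sub A S _
      have hAS : A - S = -(PowerSeries.X ^ m * R) := by rw [← hR]; ring
      rw [e1, ← hQ'S]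
      refine dvd_trans ?_ e2
      rw [hAS]
      exact ⟨-R, by ring⟩
    rw [PowerSeries.X_pow_dvd_iff] at hdvd1
    intro i hi
    have := hdvd1 i hi
    rw [map_sub, hφcoeff, sub_eq_zero] at this
    exact this
  have hG1low : ∀ i < h, (G 1).coeff i = 0 := fun i hi => by
    rw [hG1close i (by omega), hlow i hi]
  have hG1c : (G 1).coeff h = c := by rw [hG1close h (by omega), hcdef]
  -- u with φ (G 1) = X^h * u
  have hG1dvd : (PowerSeries.X : PowerSeries ℚ) ^ h ∣ φ (G 1) := by
    rw [PowerSeries.X_pow_dvd_iff]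
    intro i hi
    rw [hφcoeff]; exact hG1low i hi
  obtain ⟨u, hu⟩ := hG1dvd
  have hucoeff : ∀ n, PowerSeries.coeff n u = (G 1).coeff (n + h) := by
    intro n
    have := PowerSeries.coeff_X_pow_mul u h n
    rw [← hu] at this
    rw [← this, hφcoeff, add_comm]
  have hu0 : PowerSeries.coeff 0 u = c := by rw [hucoeff, zero_add, hG1c]
  -- V with u = C c + X * V
  have hXdvd : (PowerSeries.X : PowerSeries ℚ) ∣ (u - PowerSeries.C c) := by
    rw [PowerSeries.X_dvd_iff, map_sub, PowerSeries.constantCoeff_C,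
      ← PowerSeries.coeff_zero_eq_constantCoeff_apply, hu0, sub_self]
  obtain ⟨V, hV⟩ := hXdvd
  have huV : u = PowerSeries.C c + PowerSeries.X * V := by rw [← hV]; ring
  have hVcoeff : ∀ n, PowerSeries.coeff n V = (G 1).coeff (n + 1 + h) := by
    intro n
    have h1 : PowerSeries.coeff (n + 1) (PowerSeries.X * V) = PowerSeries.coeff n V :=
      PowerSeries.coeff_succ_X_mul n V
    rw [← h1, ← hV, map_sub, hucoeff, PowerSeries.coeff_C, if_neg (Nat.succ_ne_zero n), sub_zero]
  -- the fundamental equation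
  set E : ℕ → ℕ := fun i => (h + 2) * (i + 1) - h with hEdef
  have hEge : ∀ i, i + 2 ≤ E i := by
    intro i
    have h1 : (h + 2) * (i + 1) = h * i + h + 2 * i + 2 := by ring
    show i + 2 ≤ (h + 2) * (i + 1) - h
    omega
  set W := g₀ + (PowerSeries.C c) * R + PowerSeries.X * V * R +
      ∑ i ∈ Finset.range (N - 1), φ (G (i + 2)) * PowerSeries.X ^ (E i) * R ^ (i + 2)
    with hWdef
  have hW0 : W = 0 := by
    have hXne : (PowerSeries.X : PowerSeries ℚ) ^ (m + h) ≠ 0 :=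
      pow_ne_zero _ PowerSeries.X_ne_zero
    have hmain : PowerSeries.X ^ (m + h) * W = 0 := by
      rw [hWdef]
      have hsplit : ∑ j ∈ Finset.range (N + 1), φ (G j) * (PowerSeries.X ^ m * R) ^ j
          = φ (G 0) * (PowerSeries.X ^ m * R) ^ 0 + φ (G 1) * (PowerSeries.X ^ m * R) ^ 1 +
            ∑ i ∈ Finset.range (N - 1), φ (G (i + 2)) * (PowerSeries.X ^ m * R) ^ (i + 2) := by
        have hN1 : N = (N - 1) + 1 := by omega
        rw [Finset.sum_range_succ' _ N]
        nth_rewrite 1 [hN1]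
        rw [Finset.sum_range_succ' _ (N - 1)]
        ring
      have hterm : ∀ i, φ (G (i + 2)) * (PowerSeries.X ^ m * R) ^ (i + 2)
          = PowerSeries.X ^ (m + h) * (φ (G (i + 2)) * PowerSeries.X ^ (E i) * R ^ (i + 2)) := by
        intro i
        have hpow : m * (i + 2) = (m + h) + E i := by
          have h0 : m * (i + 2) = (h + 2) * (i + 2) := by rw [hmdef]
          have h1 : (h + 2) * (i + 2) = (h + 2) * (i + 1) + (h + 2) := by ring
          have h2 : h ≤ (h + 2) * (i + 1) := by nlinarith
          show m * (i + 2) = (m + h) + ((h + 2) * (i + 1) - h)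
          omega
        rw [mul_pow, ← pow_mul, hpow, pow_add]
        ring
      calc PowerSeries.X ^ (m + h) * (g₀ + (PowerSeries.C c) * R + PowerSeries.X * V * R +
            ∑ i ∈ Finset.range (N - 1), φ (G (i + 2)) * PowerSeries.X ^ (E i) * R ^ (i + 2))
          = φ (G 0) * (PowerSeries.X ^ m * R) ^ 0 + φ (G 1) * (PowerSeries.X ^ m * R) ^ 1 +
            ∑ i ∈ Finset.range (N - 1), φ (G (i + 2)) * (PowerSeries.X ^ m * R) ^ (i + 2) := by
            have hsum : ∑ i ∈ Finset.range (N - 1),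
                  φ (G (i + 2)) * (PowerSeries.X ^ m * R) ^ (i + 2)
                = PowerSeries.X ^ (m + h) * ∑ i ∈ Finset.range (N - 1),
                  φ (G (i + 2)) * PowerSeries.X ^ (E i) * R ^ (i + 2) := by
              rw [Finset.mul_sum]
              exact Finset.sum_congr rfl fun i _ => hterm i
            rw [hg₀, hu, huV, pow_zero, pow_one, hsum, pow_add]
            ring
      _ = ∑ j ∈ Finset.range (N + 1), φ (G j) * (PowerSeries.X ^ m * R) ^ j := hsplit.symm
      _ = 0 := hexp.symm
    rcases mul_eq_zero.mp hmain with hbad | hgood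
    · exact absurd hbad hXne
    · exact hgood
  -- denominators
  obtain ⟨D, hDpos, hD⟩ := EisensteinAux.den_clear_fam G (N + 1)
  have hDne : (D : ℚ) ≠ 0 := Nat.cast_ne_zero.mpr hDpos.ne'
  have hcD : c * (D : ℚ) ∈ EisensteinAux.IR := by
    rw [← hG1c]
    exact hD 1 (by omega) h
  obtain ⟨e, he⟩ := EisensteinAux.IR_exists hcD
  have hene : e ≠ 0 := by
    intro hcon
    rw [hcon] at he
    push_cast at he
    rcases mul_eq_zero.mp he with h1 | h2
    · exact hc h1
    · exact hDne h2
  -- the main induction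
  have main : ∀ n, PowerSeries.coeff n R * (e : ℚ) ^ (n + 1) ∈ EisensteinAux.IR := by
    intro n
    induction n using Nat.strong_induction_on with
    | _ n IH =>
    have hw : PowerSeries.coeff n W = 0 := by rw [hW0, map_zero]
    rw [hWdef, map_add, map_add, map_add, map_sum, PowerSeries.coeff_C_mul] at hw
    -- c * r_n = -(g₀_n + T1 + T2)
    have hkey : c * PowerSeries.coeff n R
        = -(PowerSeries.coeff n g₀ + PowerSeries.coeff n (PowerSeries.X * V * R)
          + ∑ i ∈ Finset.range (N - 1),
              PowerSeries.coeff n (φ (G (i + 2)) * PowerSeries.X ^ (E i) * R ^ (i + 2))) := by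
      linarith [hw]
    have heq : PowerSeries.coeff n R * (e : ℚ) ^ (n + 1)
        = -(PowerSeries.coeff n g₀ + PowerSeries.coeff n (PowerSeries.X * V * R)
          + ∑ i ∈ Finset.range (N - 1),
              PowerSeries.coeff n (φ (G (i + 2)) * PowerSeries.X ^ (E i) * R ^ (i + 2)))
          * (D : ℚ) * (e : ℚ) ^ n := by
      rw [← hkey, pow_succ]
      nth_rewrite 2 [← he]
      ring
    rw [heq, show -(PowerSeries.coeff n g₀ + PowerSeries.coeff n (PowerSeries.X * V * R)
          + ∑ i ∈ Finset.range (N - 1),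
              PowerSeries.coeff n (φ (G (i + 2)) * PowerSeries.X ^ (E i) * R ^ (i + 2)))
          * (D : ℚ) * (e : ℚ) ^ n
        = -((PowerSeries.coeff n g₀ * (D : ℚ) * (e : ℚ) ^ n)
          + (PowerSeries.coeff n (PowerSeries.X * V * R) * (D : ℚ) * (e : ℚ) ^ n)
          + (∑ i ∈ Finset.range (N - 1),
              PowerSeries.coeff n (φ (G (i + 2)) * PowerSeries.X ^ (E i) * R ^ (i + 2)))
              * (D : ℚ) * (e : ℚ) ^ n) by ring]
    apply EisensteinAux.IR.neg_mem
    apply EisensteinAux.IR.add_mem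
    apply EisensteinAux.IR.add_mem
    · -- g₀ term
      apply EisensteinAux.IR.mul_mem
      · rw [hg₀coeff]
        exact hD 0 (by omega) _
      · exact EisensteinAux.intCast_pow_mem_IR e n
    · -- X * V * R term
      match n with
      | 0 =>
        have hz : PowerSeries.coeff 0 (PowerSeries.X * V * R) = 0 := by
          rw [PowerSeries.coeff_zero_eq_constantCoeff_apply, map_mul, map_mul,
            PowerSeries.constantCoeff_X, zero_mul, zero_mul]
        rw [hz, zero_mul, zero_mul]
        exact EisensteinAux.IR.zero_mem
      | (n' + 1) =>
        rw [mul_assoc PowerSeries.X V R, PowerSeries.coeff_succ_X_mul n' (V * R),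
          PowerSeries.coeff_mul, Finset.sum_mul, Finset.sum_mul]
        apply EisensteinAux.IR.sum_mem
        rintro ⟨i, k⟩ hx
        have hik : i + k = n' := Finset.HasAntidiagonal.mem_antidiagonal.mp hx
        have heq2 : PowerSeries.coeff i V * PowerSeries.coeff k R * (D : ℚ)
              * (e : ℚ) ^ (n' + 1)
            = (PowerSeries.coeff i V * (D : ℚ)) *
              (PowerSeries.coeff k R * (e : ℚ) ^ (k + 1)) * (e : ℚ) ^ i := by
          rw [show n' + 1 = (k + 1) + i by omega, pow_add]
          ring
        rw [heq2]
        apply EisensteinAux.IR.mul_mem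
        apply EisensteinAux.IR.mul_mem
        · rw [hVcoeff]; exact hD 1 (by omega) _
        · exact IH k (by omega)
        · exact EisensteinAux.intCast_pow_mem_IR e i
    · -- the sum term
      rw [Finset.sum_mul, Finset.sum_mul]
      apply EisensteinAux.IR.sum_mem
      intro i hi
      have hrange : i + 2 ≤ N := by
        have := Finset.mem_range.mp hi
        omega
      have hre : φ (G (i + 2)) * PowerSeries.X ^ (E i) * R ^ (i + 2)
          = (φ (G (i + 2)) * R ^ (i + 2)) * PowerSeries.X ^ (E i) := by ring
      rw [hre, PowerSeries.coeff_mul_X_pow']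
      split_ifs with hle
      · rw [PowerSeries.coeff_mul, Finset.sum_mul, Finset.sum_mul]
        apply EisensteinAux.IR.sum_mem
        rintro ⟨p, q⟩ hx
        have hpq : p + q = n - E i := Finset.HasAntidiagonal.mem_antidiagonal.mp hx
        have hEi : i + 2 ≤ E i := hEge i
        have hqn : q + (i + 2) ≤ n := by omega
        have heq3 : PowerSeries.coeff p (φ (G (i + 2))) * PowerSeries.coeff q (R ^ (i + 2))
              * (D : ℚ) * (e : ℚ) ^ n
            = (PowerSeries.coeff p (φ (G (i + 2))) * (D : ℚ)) *
              (PowerSeries.coeff q (R ^ (i + 2)) * (e : ℚ) ^ (q + (i + 2))) *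
              (e : ℚ) ^ (n - (q + (i + 2))) := by
          have hsplitpow : (e : ℚ) ^ n = (e : ℚ) ^ (q + (i + 2)) * (e : ℚ) ^ (n - (q + (i + 2))) := by
            rw [← pow_add, Nat.add_sub_cancel' hqn]
          rw [hsplitpow]
          ring
        rw [heq3]
        apply EisensteinAux.IR.mul_mem
        apply EisensteinAux.IR.mul_mem
        · rw [hφcoeff]; exact hD (i + 2) (by omega) _
        · have hKq : q ≤ n - E i := by omega
          have hK : n - E i < n := by omega
          exact EisensteinAux.pow_coeff_int R e (n - E i)
            (fun l hl => IH l (by omega)) (i + 2) q hKq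
        · exact EisensteinAux.intCast_pow_mem_IR e _
      · rw [zero_mul, zero_mul]
        exact EisensteinAux.IR.zero_mem
  -- conclusion
  obtain ⟨D₂, hD₂pos, hD₂⟩ := EisensteinAux.den_clear a
  refine ⟨D₂ * e.natAbs, Nat.mul_pos hD₂pos (Int.natAbs_pos.mpr hene), ?_⟩
  intro n
  apply EisensteinAux.IR_exists
  push_cast
  have hEabs : ∀ k : ℕ, PowerSeries.coeff k R * ((e.natAbs : ℚ)) ^ (k + 1)
      ∈ EisensteinAux.IR := by
    intro k
    have habs : ((e.natAbs : ℚ)) = |(e : ℚ)| := by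
      rw [Nat.cast_natAbs, Int.cast_abs]
    rcases abs_choice ((e : ℚ)) with h1 | h1
    · rw [habs, h1]
      exact main k
    · rw [habs, h1, neg_pow]
      rw [show PowerSeries.coeff k R * ((-1 : ℚ) ^ (k + 1) * (e : ℚ) ^ (k + 1))
          = (-1 : ℚ) ^ (k + 1) * (PowerSeries.coeff k R * (e : ℚ) ^ (k + 1)) by ring]
      exact EisensteinAux.IR.mul_mem
        (EisensteinAux.IR.pow_mem (EisensteinAux.IR.neg_mem EisensteinAux.IR.one_mem) _)
        (main k)
  by_cases hn : n < m
  · -- small coefficients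
    have hcoeff : PowerSeries.coeff n S = a.coeff n := by
      rw [hadef, PowerSeries.coeff_trunc, if_pos hn]
    rw [mul_pow, hcoeff]
    rw [show a.coeff n * ((D₂ : ℚ) ^ (n + 1) * (e.natAbs : ℚ) ^ (n + 1))
        = (a.coeff n * (D₂ : ℚ)) * ((D₂ : ℚ) ^ n * (e.natAbs : ℚ) ^ (n + 1)) by
      rw [pow_succ]; ring]
    exact EisensteinAux.IR.mul_mem (hD₂ n)
      (EisensteinAux.IR.mul_mem (EisensteinAux.natCast_pow_mem_IR D₂ n)
        (EisensteinAux.natCast_pow_mem_IR e.natAbs (n + 1)))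
  · -- large coefficients
    push_neg at hn
    have hcoeff : PowerSeries.coeff n S = PowerSeries.coeff (n - m) R := by
      rw [hS, map_add, hAcoeff, if_neg (by omega), zero_add, mul_comm,
        PowerSeries.coeff_mul_X_pow', if_pos (by omega)]
    rw [mul_pow, hcoeff]
    rw [show PowerSeries.coeff (n - m) R * ((D₂ : ℚ) ^ (n + 1) * (e.natAbs : ℚ) ^ (n + 1))
        = (PowerSeries.coeff (n - m) R * (e.natAbs : ℚ) ^ ((n - m) + 1)) *
          ((e.natAbs : ℚ) ^ (n - (n - m)) * (D₂ : ℚ) ^ (n + 1)) by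
      rw [show n + 1 = ((n - m) + 1) + (n - (n - m)) by omega, pow_add ((e.natAbs : ℚ))]
      ring]
    exact EisensteinAux.IR.mul_mem (hEabs (n - m))
      (EisensteinAux.IR.mul_mem (EisensteinAux.natCast_pow_mem_IR _ _)
        (EisensteinAux.natCast_pow_mem_IR _ _))
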